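/- Let X be a real |I|×d matrix with rows f_i ∈ ℝ^d, i ∈ I (I finite), let n ∈ ℝ^I with n(i) ≥ 0 for all i, and let C^p = {Xᵀa : a ∈ ℝ^I, a(i) ≥ 0 for all i}. Then there exists y ∈ ℝ^I with Xᵀy = 0 and y(i) + n(i) > 0 for all i, if and only if the sufficient statistic t = Xᵀn belongs to the relative interior of C^p. -/

import Mathlib

/-- There exists `y` with `Xᵀy = 0` and `y + n > 0` iff the sufficient
statistic `t = Xᵀn` lies in the relative interior of the cone `C^p` (Corollary 3.5). -/
theorem exists_y_iff_t_mem_relint {I : Type*} [Fintype I] [Nonempty I] {d : ℕ}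
    (X : Matrix I (Fin d) ℝ) (n : I → ℝ) (hn : ∀ i, 0 ≤ n i)
    (Cp : Set (Fin d → ℝ))
    (hCp : Cp = {t | ∃ a : I → ℝ, (∀ i, 0 ≤ a i) ∧ t = X.transpose.mulVec a}) :
    (∃ y : I → ℝ, X.transpose.mulVec y = 0 ∧ ∀ i, 0 < y i + n i) ↔
      X.transpose.mulVec n ∈ intrinsicInterior ℝ Cp := by
  classical
  set T : (I → ℝ) →ₗ[ℝ] (Fin d → ℝ) := X.transpose.mulVecLin with hT
  have hTapp : ∀ a, T a = X.transpose.mulVec a := fun a => rfl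
  set t : Fin d → ℝ := X.transpose.mulVec n with ht
  have htCp : t ∈ Cp := by
    rw [hCp]; exact ⟨n, hn, rfl⟩
  -- Cp ⊆ range T
  have hCpV : Cp ⊆ (LinearMap.range T : Set (Fin d → ℝ)) := by
    rintro x hx
    rw [hCp] at hx
    obtain ⟨a, -, rfl⟩ := hx
    exact ⟨a, rfl⟩
  -- affineSpan of Cp ⊆ range T (as sets)
  have hspan : (affineSpan ℝ Cp : Set (Fin d → ℝ)) ⊆ (LinearMap.range T : Set (Fin d → ℝ)) := by
    intro x hx
    have : affineSpan ℝ Cp ≤ (LinearMap.range T).toAffineSubspace := by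
      rw [affineSpan_le]; exact hCpV
    exact this hx
  constructor
  · rintro ⟨y, hy0, hypos⟩
    set b : I → ℝ := fun i => y i + n i with hb
    have hTb : T b = t := by
      rw [hTapp, hb]
      have : (fun i => y i + n i) = y + n := rfl
      rw [this, Matrix.mulVec_add, hy0, zero_add]
    -- section of T.rangeRestrict
    obtain ⟨g, hg⟩ := T.rangeRestrict.exists_rightInverse_of_surjective
      (LinearMap.range_rangeRestrict T ▸ rfl)
    have hginv : ∀ v : LinearMap.range T, T (g v) = (v : Fin d → ℝ) := by
      intro v
      have := congrArg (fun f => (f v : LinearMap.range T)) hg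
      simpa using congrArg Subtype.val this
    have hgc : Continuous g := g.continuous_of_finiteDimensional
    obtain ⟨C, hC, hCb⟩ := (LinearMap.toContinuousLinearMap g).bound
    -- min of b
    obtain ⟨i0, -, hi0⟩ := Finset.exists_min_image Finset.univ b ⟨Classical.arbitrary I, Finset.mem_univ _⟩
    set ε : ℝ := b i0 with hε
    have hεpos : 0 < ε := hypos i0
    set δ : ℝ := ε / C with hδ
    have hδpos : 0 < δ := div_pos hεpos hC
    rw [mem_intrinsicInterior]
    have htmem : t ∈ affineSpan ℝ Cp := subset_affineSpan ℝ Cp htCp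
    refine ⟨⟨t, htmem⟩, ?_, rfl⟩
    rw [mem_interior]
    refine ⟨Metric.ball ⟨t, htmem⟩ δ, ?_, Metric.isOpen_ball, Metric.mem_ball_self hδpos⟩
    intro z hz
    have hzV : (z : Fin d → ℝ) ∈ LinearMap.range T := hspan z.2
    have htV : t ∈ LinearMap.range T := hCpV htCp
    set v : LinearMap.range T := ⟨(z : Fin d → ℝ) - t, Submodule.sub_mem _ hzV htV⟩ with hv
    have hnormv : ‖(v : Fin d → ℝ)‖ < δ := by
      have : dist z (⟨t, htmem⟩ : affineSpan ℝ Cp) < δ := hz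
      rw [Subtype.dist_eq, dist_eq_norm] at this
      exact this
    have hgsmall : ∀ i, |g v i| < ε := by
      intro i
      have h1 : ‖g v i‖ ≤ ‖g v‖ := norm_le_pi_norm (g v) i
      have h2 : ‖(LinearMap.toContinuousLinearMap g) v‖ ≤ C * ‖(v : Fin d → ℝ)‖ := by
        have := hCb v
        exact this
      have h3 : C * ‖(v : Fin d → ℝ)‖ < C * δ := by
        exact (mul_lt_mul_iff_right₀ hC).2 hnormv
      have h4 : C * δ = ε := by
        rw [hδ]; field_simp
      have : ‖g v i‖ < ε := by
        calc ‖g v i‖ ≤ ‖g v‖ := h1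
          _ = ‖(LinearMap.toContinuousLinearMap g) v‖ := rfl
          _ ≤ C * ‖(v : Fin d → ℝ)‖ := h2
          _ < C * δ := h3
          _ = ε := h4
      simpa [Real.norm_eq_abs] using this
    show (z : Fin d → ℝ) ∈ Cp
    refine (Set.ext_iff.1 hCp (z : Fin d → ℝ)).2 ⟨b + g v, ?_, ?_⟩
    · intro i
      have h1 : ε ≤ b i := hi0 i (Finset.mem_univ i)
      have h2 := hgsmall i
      have : -(g v i) < ε := by
        have := abs_lt.1 h2
        linarith [this.1]
      simp only [Pi.add_apply]
      linarith
    · have : T (b + g v) = (z : Fin d → ℝ) := by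
        rw [map_add, hTb, hginv]
        simp [hv]
      rw [← hTapp, this]
  · rintro h
    rw [mem_intrinsicInterior] at h
    obtain ⟨x, hxint, hxt⟩ := h
    set s : Fin d → ℝ := X.transpose.mulVec (fun _ => 1) with hs
    have hsCp : s ∈ Cp := by rw [hCp]; exact ⟨fun _ => 1, fun _ => zero_le_one, rfl⟩
    -- curve λ ↦ t + λ • (t - s) lies in affineSpan
    have hdir : t - s ∈ (affineSpan ℝ Cp).direction := by
      have h1 := subset_affineSpan ℝ Cp htCp
      have h2 := subset_affineSpan ℝ Cp hsCp
      have := AffineSubspace.vsub_mem_direction h1 h2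
      simpa [vsub_eq_sub] using this
    have htmem : t ∈ affineSpan ℝ Cp := subset_affineSpan ℝ Cp htCp
    have hmem : ∀ l : ℝ, t + l • (t - s) ∈ affineSpan ℝ Cp := by
      intro l
      have : l • (t - s) ∈ (affineSpan ℝ Cp).direction :=
        Submodule.smul_mem _ _ hdir
      have := AffineSubspace.vadd_mem_of_mem_direction this htmem
      simpa [vadd_eq_add, add_comm] using this
    set c : ℝ → affineSpan ℝ Cp := fun l => ⟨t + l • (t - s), hmem l⟩ with hc
    have hcc : Continuous c := by
      apply Continuous.subtype_mk
      continuity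
    have hc0 : c 0 = x := by
      apply Subtype.ext
      simp [hc, hxt]
    have hopen : IsOpen (c ⁻¹' interior ((↑) ⁻¹' Cp : Set <| affineSpan ℝ Cp)) :=
      isOpen_interior.preimage hcc
    have h0mem : (0 : ℝ) ∈ c ⁻¹' interior ((↑) ⁻¹' Cp : Set <| affineSpan ℝ Cp) := by
      simp only [Set.mem_preimage, hc0]; exact hxint
    obtain ⟨r, hr, hball⟩ := Metric.isOpen_iff.1 hopen 0 h0mem
    set l : ℝ := r / 2 with hl
    have hlpos : 0 < l := by positivity
    have hlball : l ∈ Metric.ball (0:ℝ) r := by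
      simp only [Metric.mem_ball, dist_zero_right, Real.norm_eq_abs]
      rw [abs_of_pos hlpos]
      linarith
    have hcl' := hball hlball
    have hcl2 : (c l) ∈ (Subtype.val ⁻¹' Cp : Set (affineSpan ℝ Cp)) := interior_subset hcl'
    have hcl : ((c l : affineSpan ℝ Cp) : Fin d → ℝ) ∈ Cp := hcl2
    obtain ⟨a, ha, hae⟩ := (Set.ext_iff.1 hCp _).1 hcl
    have hae : t + l • (t - s) = X.transpose.mulVec a := hae
    -- t + l•(t-s) = Xᵀ a, so t = Xᵀ ((a + l•1)/(1+l))
    have h1l : (0:ℝ) < 1 + l := by linarith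
    refine ⟨(fun i => (a i + l) / (1 + l)) - n, ?_, ?_⟩
    · have key : X.transpose.mulVec (fun i => (a i + l) / (1 + l)) = t := by
        have hdecomp : (fun i => (a i + l) / (1 + l)) = (1 + l)⁻¹ • (a + l • (fun _ : I => (1:ℝ))) := by
          funext i
          simp [div_eq_inv_mul, smul_eq_mul]
        rw [hdecomp, Matrix.mulVec_smul, Matrix.mulVec_add, Matrix.mulVec_smul, ← hae, ← hs]
        have : t + l • (t - s) + l • s = (1 + l) • t := by
          rw [smul_sub]
          module
        rw [this, smul_smul, inv_mul_cancel₀ (ne_of_gt h1l), one_smul]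
      have : X.transpose.mulVec ((fun i => (a i + l) / (1 + l)) - n) =
          X.transpose.mulVec (fun i => (a i + l) / (1 + l)) - X.transpose.mulVec n := by
        rw [Matrix.mulVec_sub]
      rw [this, key, ht, sub_self]
    · intro i
      have : ((fun i => (a i + l) / (1 + l)) - n) i + n i = (a i + l) / (1 + l) := by
        simp
      rw [this]
      exact div_pos (by linarith [ha i]) h1l
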